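/- For every finite family of pairs $(\zeta_1,\beta_1),\dots,(\zeta_k,\beta_k)\in\mathcal B\times\mathcal B$ and all $b_1,\dots,b_k,c_1,\dots,c_k\in\mathcal B$ satisfying $\sum_{i=1}^{k} c_i b_i=0$, one has $\sum_{i,j=1}^{k} b_i^*\,\mathcal L^{(\zeta_i,\beta_i),(\zeta_j,\beta_j)}(c_i^*\,c_j)\,b_j\ \ge\ 0$ in $\mathcal B$; indeed this sum equals $\bigl(\sum_{j=1}^{k}\sigma_1(c_j)\,\zeta_j\,b_j\bigr)^*\bigl(\sum_{j=1}^{k}\sigma_1(c_j)\,\zeta_j\,b_j\bigr)$. (Conditional complete positive definiteness of the generator kernel $\mathcal L$ in this example.) -/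
import Mathlib


/- `𝒜` denotes the C*-algebra of bounded continuous functions `[0,∞) → ℂ` (sup norm,
pointwise operations, conjugation as involution), realized as `BoundedContinuousFunction ℝ≥0 ℂ`.
The paper's algebra `ℬ = C₀[0,∞) + ℂ·1` is the set of `f ∈ 𝒜` possessing a limit at
infinity (`memB`), and `C₀[0,∞)` is the set of `f ∈ 𝒜` vanishing at infinity (`memC0`).
Positivity `0 ≤ b` in `ℬ` is the C*-order, i.e. pointwise `0 ≤ b s` in `ℂ`
(with the `ComplexOrder`). -/

open Filter BoundedContinuousFunction NormedSpace
open scoped NNReal ComplexOrder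

noncomputable section

abbrev A : Type := BoundedContinuousFunction ℝ≥0 ℂ

/-- the left shift `σ_t`, `(σ_t f)(s) = f (s + t)`. -/
def sigma (t : ℝ≥0) (f : A) : A :=
  f.compContinuous ⟨fun s => s + t, by continuity⟩

/-- membership in `ℬ = C₀[0,∞) + ℂ·1`: existence of a limit at infinity. -/
def memB (f : A) : Prop := ∃ c : ℂ, Tendsto ⇑f atTop (nhds c)

/-- membership in `C₀[0,∞)`: vanishing at infinity. -/
def memC0 (f : A) : Prop := Tendsto ⇑f atTop (nhds 0)

lemma sigma_mul (x y : A) : sigma 1 (x * y) = sigma 1 x * sigma 1 y := by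
  ext s; rfl

lemma sigma_star (x : A) : sigma 1 (star x) = star (sigma 1 x) := by
  ext s; rfl

/-- conditional complete positive definiteness of the generator kernel
`𝓛^{(ζ,β),(ζ',β')}(b) = ζ̄ σ₁(b) ζ' + β̄ b + b β'`: if `∑ᵢ cᵢ bᵢ = 0` then
`∑_{i,j} bᵢ* 𝓛^{(ζᵢ,βᵢ),(ζⱼ,βⱼ)}(cᵢ* cⱼ) bⱼ = (∑ⱼ σ₁(cⱼ) ζⱼ bⱼ)* (∑ⱼ σ₁(cⱼ) ζⱼ bⱼ) ≥ 0`. -/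
theorem stmt2 (k : ℕ) (ζ β b c : Fin k → A)
    (hζ : ∀ i, memB (ζ i)) (hβ : ∀ i, memB (β i))
    (hb : ∀ i, memB (b i)) (hc : ∀ i, memB (c i))
    (hsum : ∑ i, c i * b i = 0) :
    (∑ i, ∑ j, star (b i) *
        (star (ζ i) * sigma 1 (star (c i) * c j) * ζ j
          + star (β i) * (star (c i) * c j) + (star (c i) * c j) * β j) * b j)
      = star (∑ j, sigma 1 (c j) * ζ j * b j) * (∑ j, sigma 1 (c j) * ζ j * b j)
    ∧ ∀ s : ℝ≥0,
        0 ≤ (∑ i, ∑ j, star (b i) *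
          (star (ζ i) * sigma 1 (star (c i) * c j) * ζ j
            + star (β i) * (star (c i) * c j) + (star (c i) * c j) * β j) * b j) s := by
  have key : (∑ i, ∑ j, star (b i) *
        (star (ζ i) * sigma 1 (star (c i) * c j) * ζ j
          + star (β i) * (star (c i) * c j) + (star (c i) * c j) * β j) * b j)
      = star (∑ j, sigma 1 (c j) * ζ j * b j) * (∑ j, sigma 1 (c j) * ζ j * b j) := by
    have h1 : ∀ i j : Fin k, star (b i) *
        (star (ζ i) * sigma 1 (star (c i) * c j) * ζ j
          + star (β i) * (star (c i) * c j) + (star (c i) * c j) * β j) * b j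
        = star (sigma 1 (c i) * ζ i * b i) * (sigma 1 (c j) * ζ j * b j)
          + star (c i * (β i * b i)) * (c j * b j)
          + star (c i * b i) * (c j * (β j * b j)) := by
      intro i j
      simp only [sigma_mul, sigma_star, star_mul, star_star]
      ring
    calc (∑ i, ∑ j, star (b i) *
        (star (ζ i) * sigma 1 (star (c i) * c j) * ζ j
          + star (β i) * (star (c i) * c j) + (star (c i) * c j) * β j) * b j)
        = ∑ i, ∑ j, (star (sigma 1 (c i) * ζ i * b i) * (sigma 1 (c j) * ζ j * b j)
          + star (c i * (β i * b i)) * (c j * b j)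
          + star (c i * b i) * (c j * (β j * b j))) := by
          simp only [h1]
      _ = (∑ i, star (sigma 1 (c i) * ζ i * b i)) * (∑ j, sigma 1 (c j) * ζ j * b j)
          + (∑ i, star (c i * (β i * b i))) * (∑ j, c j * b j)
          + (∑ i, star (c i * b i)) * (∑ j, c j * (β j * b j)) := by
          simp only [Finset.sum_add_distrib, Finset.sum_mul_sum]
      _ = star (∑ j, sigma 1 (c j) * ζ j * b j) * (∑ j, sigma 1 (c j) * ζ j * b j) := by
          have h2 : (∑ i, star (c i * b i)) = 0 := by
            rw [← star_sum, hsum, star_zero]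
          rw [hsum, mul_zero, h2, zero_mul, add_zero, add_zero, ← star_sum]
  refine ⟨key, fun s => ?_⟩
  rw [key]
  simp only [BoundedContinuousFunction.mul_apply, BoundedContinuousFunction.star_apply]
  exact star_mul_self_nonneg _
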